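/- Let E1, E2, E3 be i.i.d. Exp(1) random variables and x, y > 0. Then E[|x·E1 − E2| · |y·E1 − E3|] = 2xy − (x+y) + 2y²/((1+x)²(1+x+y)) + 2x²/((1+y)²(1+x+y)) + 1. -/

import Mathlib

open MeasureTheory ProbabilityTheory Real Set Filter
open scoped ENNReal

set_option linter.unusedVariables false


lemma pae_ftc {F f : ℝ → ℝ} (t : ℝ)
    (hderiv : ∀ a ∈ Ioi t, HasDerivAt F (f a) a)
    (hcont : ContinuousWithinAt F (Ici t) t)
    (hpos : ∀ a ∈ Ioi t, 0 ≤ f a)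
    (hlim : Tendsto F atTop (nhds 0)) :
    IntegrableOn f (Ioi t) ∧ ∫ a in Ioi t, f a = - F t := by
  have hInt := integrableOn_Ioi_deriv_of_nonneg hcont hderiv hpos hlim
  exact ⟨hInt, by rw [integral_Ioi_of_hasDerivAt_of_tendsto hcont hderiv hInt hlim, zero_sub]⟩

lemma pae_tendsto_pow (n : ℕ) {c : ℝ} (hc : 0 < c) :
    Tendsto (fun a : ℝ => a ^ n * exp (-(c * a))) atTop (nhds 0) := by
  have h1 : Tendsto (fun a : ℝ => c * a) atTop atTop :=
    Tendsto.const_mul_atTop hc tendsto_id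
  have h2 := (tendsto_pow_mul_exp_neg_atTop_nhds_zero n).comp h1
  have h3 := h2.const_mul (1 / c ^ n)
  rw [mul_zero] at h3
  refine h3.congr fun a => ?_
  simp only [Function.comp]
  field_simp
  ring

-- derivative of exp(-(c*a))
lemma pae_hd_exp (c a : ℝ) :
    HasDerivAt (fun a : ℝ => exp (-(c * a))) (exp (-(c * a)) * (-c)) a := by
  have h : HasDerivAt (fun a : ℝ => -(c * a)) (-c) a := by
    simpa using ((hasDerivAt_id a).const_mul c).fun_neg
  exact h.exp

-- piece 1 of inner integral
lemma pae_piece1 {t : ℝ} (ht : 0 ≤ t) :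
    ∫ b in (0:ℝ)..t, (t - b) * exp (-b) = exp (-t) + t - 1 := by
  have hd : ∀ b ∈ uIcc (0:ℝ) t, HasDerivAt (fun b => (b - t + 1) * exp (-b))
      ((t - b) * exp (-b)) b := by
    intro b _
    have h1 : HasDerivAt (fun b : ℝ => b - t + 1) 1 b := by
      simpa using ((hasDerivAt_id b).sub_const t).add_const 1
    have h2 : HasDerivAt (fun b : ℝ => exp (-b)) (exp (-b) * (-1)) b := by
      simpa using pae_hd_exp 1 b
    have := h1.fun_mul h2
    convert! this using 1
    ring
  have hcont : IntervalIntegrable (fun b => (t - b) * exp (-b)) volume 0 t :=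
    (Continuous.intervalIntegrable (by continuity) 0 t)
  have := intervalIntegral.integral_eq_sub_of_hasDerivAt hd hcont
  rw [this]
  simp [Real.exp_zero]
  ring

-- piece 2
lemma pae_piece2 {t : ℝ} (ht : 0 ≤ t) :
    IntegrableOn (fun b => (b - t) * exp (-b)) (Ioi t) ∧
      ∫ b in Ioi t, (b - t) * exp (-b) = exp (-t) := by
  have hd : ∀ b ∈ Ioi t, HasDerivAt (fun b : ℝ => -((b - t + 1) * exp (-b)))
      ((b - t) * exp (-b)) b := by
    intro b _
    have h1 : HasDerivAt (fun b : ℝ => b - t + 1) 1 b := by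
      simpa using ((hasDerivAt_id b).sub_const t).add_const 1
    have h2 : HasDerivAt (fun b : ℝ => exp (-b)) (exp (-b) * (-1)) b := by
      simpa using pae_hd_exp 1 b
    have := (h1.fun_mul h2).fun_neg
    convert! this using 1
    ring
  have hlim : Tendsto (fun b : ℝ => -((b - t + 1) * exp (-b))) atTop (nhds 0) := by
    have h1 := pae_tendsto_pow 1 (c := 1) one_pos
    have h0 := pae_tendsto_pow 0 (c := 1) one_pos
    simp only [pow_one, pow_zero, one_mul] at h1 h0
    have := (h1.add (h0.const_mul (1 - t))).neg
    simp only [mul_zero, add_zero, neg_zero] at this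
    refine this.congr fun b => ?_
    ring_nf
  have hpos : ∀ b ∈ Ioi t, 0 ≤ (b - t) * exp (-b) := fun b hb =>
    mul_nonneg (by linarith [mem_Ioi.mp hb]) (exp_nonneg _)
  have hcont : ContinuousWithinAt (fun b : ℝ => -((b - t + 1) * exp (-b))) (Ici t) t :=
    (Continuous.continuousWithinAt (by continuity))
  have h := pae_ftc t hd hcont hpos hlim
  refine ⟨h.1, ?_⟩
  rw [h.2]
  simp

-- the inner integral
lemma pae_inner {t : ℝ} (ht : 0 ≤ t) :
    IntegrableOn (fun b => |t - b| * exp (-b)) (Ioi 0) ∧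
      ∫ b in Ioi 0, |t - b| * exp (-b) = t - 1 + 2 * exp (-t) := by
  have hsplit : Ioc (0:ℝ) t ∪ Ioi t = Ioi 0 := Ioc_union_Ioi_eq_Ioi ht
  have hdisj : Disjoint (Ioc (0:ℝ) t) (Ioi t) := Ioc_disjoint_Ioi le_rfl
  have hint1 : IntegrableOn (fun b => |t - b| * exp (-b)) (Ioc 0 t) :=
    (Continuous.integrableOn_Ioc (by continuity))
  have hint2 : IntegrableOn (fun b => |t - b| * exp (-b)) (Ioi t) := by
    refine (pae_piece2 ht).1.congr_fun (fun b hb => ?_) measurableSet_Ioi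
    rw [abs_of_nonpos (by linarith [mem_Ioi.mp hb])]
    ring
  have hintU : IntegrableOn (fun b => |t - b| * exp (-b)) (Ioi 0) := by
    rw [← hsplit]; exact hint1.union hint2
  refine ⟨hintU, ?_⟩
  rw [← hsplit, setIntegral_union hdisj measurableSet_Ioi hint1 hint2]
  have e1 : ∫ b in Ioc (0:ℝ) t, |t - b| * exp (-b) = exp (-t) + t - 1 := by
    rw [← pae_piece1 ht, intervalIntegral.integral_of_le ht]
    refine setIntegral_congr_fun measurableSet_Ioc fun b hb => ?_
    rw [abs_of_nonneg (by linarith [hb.2])]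
  have e2 : ∫ b in Ioi t, |t - b| * exp (-b) = exp (-t) := by
    rw [← (pae_piece2 ht).2]
    refine setIntegral_congr_fun measurableSet_Ioi fun b hb => ?_
    rw [abs_of_nonpos (by linarith [mem_Ioi.mp hb])]
    ring
  rw [e1, e2]; ring

lemma pae_g_nonneg {t : ℝ} (ht : 0 ≤ t) : 0 ≤ t - 1 + 2 * exp (-t) := by
  linarith [add_one_le_exp (-t), exp_nonneg (-t)]

lemma pae_hd_S {c : ℝ} (hc : 0 < c) (a : ℝ) :
    HasDerivAt (fun a : ℝ => -exp (-(c * a)) / c) (exp (-(c * a))) a := by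
  have := ((pae_hd_exp c a).fun_neg).div_const c
  convert! this using 1
  field_simp

lemma pae_hd_T {c : ℝ} (hc : 0 < c) (a : ℝ) :
    HasDerivAt (fun a : ℝ => -((a / c + 1 / c ^ 2) * exp (-(c * a))))
      (a * exp (-(c * a))) a := by
  have h1 : HasDerivAt (fun a : ℝ => a / c + 1 / c ^ 2) (1 / c) a :=
    ((hasDerivAt_id a).div_const c).add_const _
  have := (h1.fun_mul (pae_hd_exp c a)).fun_neg
  convert! this using 1
  field_simp
  ring

lemma pae_hd_U (a : ℝ) :
    HasDerivAt (fun a : ℝ => -((a ^ 2 + 2 * a + 2) * exp (-a)))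
      (a ^ 2 * exp (-a)) a := by
  have h1 : HasDerivAt (fun a : ℝ => a ^ 2 + 2 * a + 2) (2 * a + 2) a := by
    have := ((hasDerivAt_pow 2 a).fun_add (((hasDerivAt_id a).const_mul 2))).add_const 2
    convert! this using 1
    ring
  have h2 : HasDerivAt (fun a : ℝ => exp (-a)) (exp (-a) * (-1)) a := by
    simpa using pae_hd_exp 1 a
  have := (h1.fun_mul h2).fun_neg
  convert! this using 1
  ring

lemma pae_lim_S {c : ℝ} (hc : 0 < c) :
    Tendsto (fun a : ℝ => -exp (-(c * a)) / c) atTop (nhds 0) := by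
  have h := ((pae_tendsto_pow 0 hc).neg).div_const c
  simp only [pow_zero, one_mul, neg_zero, zero_div] at h
  exact h

lemma pae_lim_T {c : ℝ} (hc : 0 < c) :
    Tendsto (fun a : ℝ => -((a / c + 1 / c ^ 2) * exp (-(c * a)))) atTop (nhds 0) := by
  have h1 := (pae_tendsto_pow 1 hc).const_mul (1 / c)
  have h0 := (pae_tendsto_pow 0 hc).const_mul (1 / c ^ 2)
  have h := (h1.add h0).neg
  simp only [pow_one, pow_zero, one_mul, mul_zero, add_zero, neg_zero] at h
  refine h.congr fun a => ?_
  ring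

lemma pae_lim_U :
    Tendsto (fun a : ℝ => -((a ^ 2 + 2 * a + 2) * exp (-a))) atTop (nhds 0) := by
  have h2 := pae_tendsto_pow 2 (c := 1) one_pos
  have h1 := (pae_tendsto_pow 1 (c := 1) one_pos).const_mul 2
  have h0 := (pae_tendsto_pow 0 (c := 1) one_pos).const_mul 2
  have h := ((h2.add h1).add h0).neg
  simp only [pow_one, pow_zero, one_mul, mul_zero, add_zero, neg_zero] at h
  refine h.congr fun a => ?_
  ring_nf

lemma pae_outer {x y : ℝ} (hx : 0 < x) (hy : 0 < y) :
    IntegrableOn (fun a => (x * a - 1 + 2 * exp (-(x * a))) *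
        (y * a - 1 + 2 * exp (-(y * a))) * exp (-a)) (Ioi 0) ∧
      ∫ a in Ioi 0, (x * a - 1 + 2 * exp (-(x * a))) *
          (y * a - 1 + 2 * exp (-(y * a))) * exp (-a)
        = 2 * x * y - (x + y) + 1 + 2 * x / (1 + y) ^ 2 + 2 * y / (1 + x) ^ 2
          - 2 / (1 + x) - 2 / (1 + y) + 4 / (1 + x + y) := by
  have h1x : (0:ℝ) < 1 + x := by linarith
  have h1y : (0:ℝ) < 1 + y := by linarith
  have h1xy : (0:ℝ) < 1 + x + y := by linarith
  set F : ℝ → ℝ := fun a =>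
    x * y * -((a ^ 2 + 2 * a + 2) * exp (-a))
    - (x + y) * -((a / 1 + 1 / 1 ^ 2) * exp (-(1 * a)))
    + -exp (-(1 * a)) / 1
    + 2 * x * -((a / (1 + y) + 1 / (1 + y) ^ 2) * exp (-((1 + y) * a)))
    + 2 * y * -((a / (1 + x) + 1 / (1 + x) ^ 2) * exp (-((1 + x) * a)))
    - 2 * (-exp (-((1 + x) * a)) / (1 + x))
    - 2 * (-exp (-((1 + y) * a)) / (1 + y))
    + 4 * (-exp (-((1 + x + y) * a)) / (1 + x + y)) with hF
  have hderiv : ∀ a ∈ Ioi (0:ℝ), HasDerivAt F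
      ((x * a - 1 + 2 * exp (-(x * a))) * (y * a - 1 + 2 * exp (-(y * a))) * exp (-a)) a := by
    intro a _
    have d1 := (pae_hd_U a).const_mul (x * y)
    have d2 := (pae_hd_T one_pos a).const_mul (x + y)
    have d3 := pae_hd_S one_pos a
    have d4 := (pae_hd_T h1y a).const_mul (2 * x)
    have d5 := (pae_hd_T h1x a).const_mul (2 * y)
    have d6 := (pae_hd_S h1x a).const_mul 2
    have d7 := (pae_hd_S h1y a).const_mul 2
    have d8 := (pae_hd_S h1xy a).const_mul 4
    have hD := ((((((d1.fun_sub d2).fun_add d3).fun_add d4).fun_add d5).fun_sub d6).fun_sub d7).fun_add d8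
    convert! hD using 1
    have e1 : exp (-((1 + x) * a)) = exp (-(x * a)) * exp (-a) := by
      rw [← exp_add]; congr 1; ring
    have e2 : exp (-((1 + y) * a)) = exp (-(y * a)) * exp (-a) := by
      rw [← exp_add]; congr 1; ring
    have e3 : exp (-((1 + x + y) * a)) = exp (-(x * a)) * (exp (-(y * a)) * exp (-a)) := by
      rw [← exp_add, ← exp_add]; congr 1; ring
    rw [e1, e2, e3, one_mul]
    ring
  have hcont : ContinuousWithinAt F (Ici 0) 0 :=
    Continuous.continuousWithinAt (by rw [hF]; fun_prop)
  have hpos : ∀ a ∈ Ioi (0:ℝ), 0 ≤ (x * a - 1 + 2 * exp (-(x * a))) *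
      (y * a - 1 + 2 * exp (-(y * a))) * exp (-a) := by
    intro a ha
    have ha' : 0 < a := mem_Ioi.mp ha
    exact mul_nonneg (mul_nonneg (pae_g_nonneg (by positivity)) (pae_g_nonneg (by positivity)))
      (exp_nonneg _)
  have hlim : Tendsto F atTop (nhds 0) := by
    have l1 := pae_lim_U.const_mul (x * y)
    have l2 := (pae_lim_T one_pos).const_mul (x + y)
    have l3 := pae_lim_S one_pos
    have l4 := (pae_lim_T h1y).const_mul (2 * x)
    have l5 := (pae_lim_T h1x).const_mul (2 * y)
    have l6 := (pae_lim_S h1x).const_mul 2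
    have l7 := (pae_lim_S h1y).const_mul 2
    have l8 := (pae_lim_S h1xy).const_mul 4
    have this := ((((((l1.sub l2).add l3).add l4).add l5).sub l6).sub l7).add l8
    rw [hF]
    convert this using 2
    norm_num
  have h := pae_ftc 0 hderiv hcont hpos hlim
  refine ⟨h.1, ?_⟩
  rw [h.2, hF]
  simp only [mul_zero, zero_div, zero_add, zero_pow, ne_eq, OfNat.ofNat_ne_zero,
    not_false_iff, exp_zero, neg_zero, pow_two]
  norm_num
  field_simp
  ring

lemma pae_expMeasure_eq : expMeasure 1 = volume.withDensity (exponentialPDF 1) := rfl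

lemma pae_measurable_pdf : Measurable (exponentialPDF 1) :=
  (measurable_exponentialPDFReal 1).ennreal_ofReal

lemma pae_lint_exp {h : ℝ → ℝ≥0∞} (hh : Measurable h) :
    ∫⁻ a, h a ∂(expMeasure 1) = ∫⁻ a in Ioi 0, h a * ENNReal.ofReal (exp (-a)) := by
  rw [pae_expMeasure_eq, lintegral_withDensity_eq_lintegral_mul volume pae_measurable_pdf hh]
  rw [← lintegral_add_compl (fun a => (exponentialPDF 1 * h) a) (measurableSet_Ioi (a := (0:ℝ)))]
  have hcompl : ∫⁻ a in (Ioi (0:ℝ))ᶜ, (exponentialPDF 1 * h) a = 0 := by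
    rw [compl_Ioi, Measure.restrict_congr_set Iio_ae_eq_Iic.symm]
    have hz : ∫⁻ a in Iio (0:ℝ), (exponentialPDF 1 * h) a = ∫⁻ _ in Iio (0:ℝ), (0:ℝ≥0∞) := by
      apply setLIntegral_congr_fun measurableSet_Iio ?_
      intro a ha
      rw [Pi.mul_apply, exponentialPDF_of_neg (mem_Iio.mp ha), zero_mul]
    rw [hz]
    simp
  rw [hcompl, add_zero]
  refine setLIntegral_congr_fun measurableSet_Ioi
    (fun a (ha : a ∈ Ioi (0:ℝ)) => ?_)
  rw [Pi.mul_apply, exponentialPDF_of_nonneg (le_of_lt (mem_Ioi.mp ha))]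
  rw [one_mul, one_mul, mul_comm]

lemma pae_ae_nonneg : ∀ᵐ a ∂(expMeasure 1), 0 ≤ a := by
  rw [ae_iff]
  have : {a : ℝ | ¬ 0 ≤ a} = Iio 0 := by ext a; simp [mem_Iio]
  rw [this, pae_expMeasure_eq, withDensity_apply _ measurableSet_Iio]
  rw [setLIntegral_congr_fun measurableSet_Iio
    (fun a (ha : a ∈ Iio (0:ℝ)) =>
      exponentialPDF_of_neg (mem_Iio.mp ha))]
  simp

lemma pae_lint_abs {t : ℝ} (ht : 0 ≤ t) :
    ∫⁻ b, ENNReal.ofReal |t - b| ∂(expMeasure 1)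
      = ENNReal.ofReal (t - 1 + 2 * exp (-t)) := by
  rw [pae_lint_exp (h := fun b => ENNReal.ofReal |t - b|) (by fun_prop)]
  have h1 : ∫⁻ b in Ioi (0:ℝ), ENNReal.ofReal |t - b| * ENNReal.ofReal (exp (-b))
      = ∫⁻ b in Ioi (0:ℝ), ENNReal.ofReal (|t - b| * exp (-b)) := by
    refine lintegral_congr fun b => ?_
    rw [← ENNReal.ofReal_mul (abs_nonneg _)]
  rw [h1, ← ofReal_integral_eq_lintegral_ofReal (pae_inner ht).1
    ((ae_restrict_iff' measurableSet_Ioi).mpr (Filter.Eventually.of_forall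
      (fun b _ => mul_nonneg (abs_nonneg _) (exp_nonneg _)))), (pae_inner ht).2]

theorem product_abs_exponential_expectation
    {Ω : Type*} [MeasureSpace Ω] [IsProbabilityMeasure (ℙ : Measure Ω)]
    (E : Fin 3 → Ω → ℝ) (hm : ∀ i, Measurable (E i))
    (hlaw : ∀ i, Measure.map (E i) ℙ = expMeasure 1)
    (hind : iIndepFun E ℙ)
    (x y : ℝ) (hx : 0 < x) (hy : 0 < y) :
    ∫ ω, |x * E 0 ω - E 1 ω| * |y * E 0 ω - E 2 ω| ∂ℙ
      = 2 * x * y - (x + y) + 2 * y ^ 2 / ((1 + x) ^ 2 * (1 + x + y))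
        + 2 * x ^ 2 / ((1 + y) ^ 2 * (1 + x + y)) + 1 := by
  set ν : Measure ℝ := expMeasure 1 with hν
  haveI : IsProbabilityMeasure ν := isProbabilityMeasure_expMeasure one_pos
  -- joint law
  have hm12 : Measure.map (fun ω => (E 1 ω, E 2 ω)) ℙ = ν.prod ν := by
    rw [(indepFun_iff_map_prod_eq_prod_map_map (hm 1).aemeasurable
      (hm 2).aemeasurable).mp (hind.indepFun (show (1:Fin 3) ≠ 2 by decide)),
      hlaw 1, hlaw 2]
  have h0 : IndepFun (E 0) (fun ω => (E 1 ω, E 2 ω)) ℙ :=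
    (hind.indepFun_prodMk hm 1 2 0 (by decide) (by decide)).symm
  have hmap : Measure.map (fun ω => (E 0 ω, (E 1 ω, E 2 ω))) ℙ = ν.prod (ν.prod ν) := by
    rw [(indepFun_iff_map_prod_eq_prod_map_map (hm 0).aemeasurable
      ((hm 1).prodMk (hm 2)).aemeasurable).mp h0, hlaw 0, hm12]
  -- transfer to ℝ³
  set Φ : ℝ × ℝ × ℝ → ℝ := fun p => |x * p.1 - p.2.1| * |y * p.1 - p.2.2| with hΦ
  have hΦm : Measurable Φ := by
    apply Measurable.mul <;> apply Measurable.abs <;> fun_prop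
  have step1 : ∫ ω, |x * E 0 ω - E 1 ω| * |y * E 0 ω - E 2 ω| ∂ℙ
      = ∫ p, Φ p ∂(ν.prod (ν.prod ν)) := by
    rw [← hmap, integral_map ((hm 0).prodMk ((hm 1).prodMk (hm 2))).aemeasurable
      hΦm.aestronglyMeasurable]
  rw [step1]
  -- to lintegral
  have step2 : ∫ p, Φ p ∂(ν.prod (ν.prod ν))
      = (∫⁻ p, ENNReal.ofReal (Φ p) ∂(ν.prod (ν.prod ν))).toReal := by
    rw [integral_eq_lintegral_of_nonneg_ae (Filter.Eventually.of_forall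
      (fun p => mul_nonneg (abs_nonneg _) (abs_nonneg _))) hΦm.aestronglyMeasurable]
  rw [step2]
  -- Tonelli
  have step3 : ∫⁻ p, ENNReal.ofReal (Φ p) ∂(ν.prod (ν.prod ν))
      = ∫⁻ a, (∫⁻ b, ENNReal.ofReal |x * a - b| ∂ν)
          * (∫⁻ c, ENNReal.ofReal |y * a - c| ∂ν) ∂ν := by
    rw [lintegral_prod _ (hΦm.ennreal_ofReal.aemeasurable)]
    refine lintegral_congr fun a => ?_
    have : ∀ q : ℝ × ℝ, ENNReal.ofReal (Φ (a, q))
        = ENNReal.ofReal |x * a - q.1| * ENNReal.ofReal |y * a - q.2| := by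
      intro q
      rw [hΦ]
      exact ENNReal.ofReal_mul (abs_nonneg _)
    rw [lintegral_congr this]
    exact lintegral_prod_mul ((measurable_const.sub measurable_id).abs.ennreal_ofReal).aemeasurable
      ((measurable_const.sub measurable_id).abs.ennreal_ofReal).aemeasurable
  rw [step3]
  -- evaluate inner integrals a.e.
  have step4 : ∫⁻ a, (∫⁻ b, ENNReal.ofReal |x * a - b| ∂ν)
          * (∫⁻ c, ENNReal.ofReal |y * a - c| ∂ν) ∂ν
      = ∫⁻ a, ENNReal.ofReal ((x * a - 1 + 2 * exp (-(x * a)))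
          * (y * a - 1 + 2 * exp (-(y * a)))) ∂ν := by
    refine lintegral_congr_ae ?_
    filter_upwards [pae_ae_nonneg] with a ha
    rw [pae_lint_abs (by positivity), pae_lint_abs (by positivity),
      ← ENNReal.ofReal_mul (pae_g_nonneg (by positivity))]
  rw [step4]
  have hPm : Measurable (fun a : ℝ => ENNReal.ofReal ((x * a - 1 + 2 * exp (-(x * a)))
      * (y * a - 1 + 2 * exp (-(y * a))))) := by fun_prop
  rw [pae_lint_exp hPm]
  have step5 : ∫⁻ a in Ioi (0:ℝ), ENNReal.ofReal ((x * a - 1 + 2 * exp (-(x * a)))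
        * (y * a - 1 + 2 * exp (-(y * a)))) * ENNReal.ofReal (exp (-a))
      = ∫⁻ a in Ioi (0:ℝ), ENNReal.ofReal ((x * a - 1 + 2 * exp (-(x * a)))
        * (y * a - 1 + 2 * exp (-(y * a))) * exp (-a)) := by
    refine setLIntegral_congr_fun measurableSet_Ioi
      (fun a ha => ?_)
    have ha' : 0 ≤ a := (mem_Ioi.mp ha).le
    rw [← ENNReal.ofReal_mul (mul_nonneg (pae_g_nonneg (by positivity))
      (pae_g_nonneg (by positivity)))]
  rw [step5, ← ofReal_integral_eq_lintegral_ofReal (pae_outer hx hy).1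
    ((ae_restrict_iff' measurableSet_Ioi).mpr (Filter.Eventually.of_forall
      (fun a ha => by
        have ha' : 0 ≤ a := (mem_Ioi.mp ha).le
        exact mul_nonneg (mul_nonneg (pae_g_nonneg (by positivity))
          (pae_g_nonneg (by positivity))) (exp_nonneg _)))), (pae_outer hx hy).2]
  rw [ENNReal.toReal_ofReal (by
    rw [← (pae_outer hx hy).2]
    refine setIntegral_nonneg measurableSet_Ioi fun a ha => ?_
    have ha' : 0 ≤ a := (mem_Ioi.mp ha).le
    exact mul_nonneg (mul_nonneg (pae_g_nonneg (by positivity))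
      (pae_g_nonneg (by positivity))) (exp_nonneg _))]
  have h1x : (0:ℝ) < 1 + x := by linarith
  have h1y : (0:ℝ) < 1 + y := by linarith
  have h1xy : (0:ℝ) < 1 + x + y := by linarith
  field_simp
  ring
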